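/- arXiv:1910.12536 — 3 statements merged into one kernel-verified Lean document; each statement's English description precedes it below -/
import Mathlib

section
/- Let G be a digraph (with connected underlying graph) equipped with an η-function θ, and let G⁻¹ = (V(G), A(G)⁻¹) be its transpose digraph equipped with its own η-function. Then for ε ∈ {+,−}, the supports of the square of the transfer matrices coincide: U_θ^{(2,ε)}(G) = U_θ^{(2,ε)}(G⁻¹). -/
open Matrix Polynomial

noncomputable section

variable {V : Type} [Fintype V] [DecidableEq V]

/-- The set of symmetric arcs of a simple graph `G`: ordered pairs of adjacent vertices. -/
abbrev GArc (G : SimpleGraph V) : Type := {p : V × V // G.Adj p.1 p.2}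

/-- The origin of an arc. -/
def arcO {G : SimpleGraph V} (a : GArc G) : V := a.1.1

/-- The terminus of an arc. -/
def arcT {G : SimpleGraph V} (a : GArc G) : V := a.1.2

/-- The inverse of an arc. -/
def arcInv {G : SimpleGraph V} (a : GArc G) : GArc G := ⟨(a.1.2, a.1.1), a.2.symm⟩

/-- The boundary matrix `K`, with `K_{v,a} = δ_{v,t(a)} / √(deg t(a))`. -/
def bdK (G : SimpleGraph V) [DecidableRel G.Adj] : Matrix V (GArc G) ℂ :=
  fun v a => if v = arcT a then ((1 / Real.sqrt (G.degree (arcT a)) : ℝ) : ℂ) else 0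

/-- The coin operator `C = 2K*K - I`. -/
def coinC (G : SimpleGraph V) [DecidableRel G.Adj] : Matrix (GArc G) (GArc G) ℂ :=
  (2 : ℂ) • ((bdK G)ᴴ * bdK G) - 1

/-- The shift operator `S`, with `S_{ab} = δ_{a,b⁻¹}`. -/
def shiftS (G : SimpleGraph V) : Matrix (GArc G) (GArc G) ℂ :=
  fun a b => if a = arcInv b then 1 else 0

/-- The perturbed shift `S_θ`, with `(S_θ)_{ab} = e^{iθ(b)} δ_{a,b⁻¹}`. -/
def shiftStheta (G : SimpleGraph V) (θ : GArc G → ℝ) : Matrix (GArc G) (GArc G) ℂ :=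
  fun a b => if a = arcInv b then Complex.exp ((θ b : ℂ) * Complex.I) else 0

/-- The Grover transfer matrix `U = SC`. -/
def groverU (G : SimpleGraph V) [DecidableRel G.Adj] : Matrix (GArc G) (GArc G) ℂ :=
  shiftS G * coinC G

/-- The transfer matrix `U_θ = S_θ C`. -/
def transferU (G : SimpleGraph V) [DecidableRel G.Adj] (θ : GArc G → ℝ) :
    Matrix (GArc G) (GArc G) ℂ :=
  shiftStheta G θ * coinC G

/-- The diagonal matrix `D_θ` with `(D_θ)_{ab} = e^{iθ(a)} δ_{ab}`. -/
def Dtheta (G : SimpleGraph V) (θ : GArc G → ℝ) : Matrix (GArc G) (GArc G) ℂ :=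
  Matrix.diagonal fun a => Complex.exp ((θ a : ℂ) * Complex.I)

/-- The positive support of a (real-valued) complex matrix. -/
def suppPos {α : Type} (M : Matrix α α ℂ) : Matrix α α ℂ :=
  fun a b => if 0 < (M a b).re then 1 else 0

/-- The negative support of a (real-valued) complex matrix. -/
def suppNeg {α : Type} (M : Matrix α α ℂ) : Matrix α α ℂ :=
  fun a b => if (M a b).re < 0 then 1 else 0

/-- The positive support of a real matrix. -/
def suppPosR {α : Type} (M : Matrix α α ℝ) : Matrix α α ℝ :=
  fun a b => if 0 < M a b then 1 else 0

/-- The negative support of a real matrix. -/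
def suppNegR {α : Type} (M : Matrix α α ℝ) : Matrix α α ℝ :=
  fun a b => if M a b < 0 then 1 else 0

/-- A digraph on `V`: an irreflexive (Boolean) arc relation. -/
structure Dgraph (V : Type) where
  adj : V → V → Bool
  loopless : ∀ v, adj v v = false

namespace Dgraph

/-- `(x,y)` is an arc of `D`. -/
def Adj (D : Dgraph V) (x y : V) : Prop := D.adj x y = true

instance (D : Dgraph V) : DecidableRel D.Adj := fun _ _ => by unfold Adj; infer_instance

/-- The underlying (undirected simple) graph `G^±`. -/
def underlying (D : Dgraph V) : SimpleGraph V where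
  Adj x y := D.Adj x y ∨ D.Adj y x
  symm := ⟨fun _ _ h => h.symm⟩
  loopless := ⟨fun v h => by
    rcases h with h | h <;> exact absurd h (by simp [Adj, D.loopless v])⟩

instance (D : Dgraph V) : DecidableRel D.underlying.Adj :=
  fun x y => inferInstanceAs (Decidable (D.Adj x y ∨ D.Adj y x))

/-- The transpose digraph `G⁻¹`. -/
def transpose (D : Dgraph V) : Dgraph V where
  adj x y := D.adj y x
  loopless := D.loopless

end Dgraph

/-- The `η`-function of a digraph `D`: `η` on `A∖A⁻¹`, `-η` on `A⁻¹∖A`, `0` on digons. -/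
def etaFun (D : Dgraph V) (η : ℝ) (a : GArc D.underlying) : ℝ :=
  if D.Adj (arcO a) (arcT a) then (if D.Adj (arcT a) (arcO a) then 0 else η) else -η

/-- The `η`-Hermitian adjacency matrix `H_η`. -/
def Heta (D : Dgraph V) (η : ℝ) : Matrix V V ℂ :=
  fun x y =>
    if D.Adj x y then (if D.Adj y x then 1 else Complex.exp ((η : ℂ) * Complex.I))
    else if D.Adj y x then Complex.exp (-(η : ℂ) * Complex.I) else 0

/-- The diagonal matrix `D^{-1/2}` of inverse square roots of degrees. -/
def degHalfInv (D : Dgraph V) : Matrix V V ℂ :=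
  Matrix.diagonal fun x => ((1 / Real.sqrt (D.underlying.degree x) : ℝ) : ℂ)

/-- The normalized `η`-Hermitian adjacency matrix `H̃_η = D^{-1/2} H_η D^{-1/2}`. -/
def normHeta (D : Dgraph V) (η : ℝ) : Matrix V V ℂ :=
  degHalfInv D * Heta D η * degHalfInv D

/-- The multiset of preimages of `μ` under `φ(z) = (z + z⁻¹)/2` on the unit circle:
the distinct roots of `z² - 2μz + 1`. -/
def phiInv (μ : ℂ) : Multiset ℂ :=
  ((X ^ 2 - Polynomial.C (2 * μ) * X + 1 : Polynomial ℂ).roots).dedup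

/-- A closed path in a graph: a nonempty chain of arcs returning to its start. -/
structure ClosedPath (G : SimpleGraph V) where
  arcs : List (GArc G)
  ne : arcs ≠ []
  chain : arcs.Chain' fun a b => arcT a = arcO b
  closed : arcT (arcs.getLast ne) = arcO (arcs.head ne)

/-- `ℐ(c) = Σ_j θ(a_j)` for a closed path `c`. -/
def pathSum {G : SimpleGraph V} (θ : GArc G → ℝ) (c : ClosedPath G) : ℝ :=
  (c.arcs.map θ).sum

/-- `x ∈ 2πℤ`. -/
def in2piZ (x : ℝ) : Prop := ∃ m : ℤ, x = 2 * Real.pi * m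

/-- `x ∈ 2π(ℤ + 1/2)`. -/
def in2piZhalf (x : ℝ) : Prop := ∃ m : ℤ, x = 2 * Real.pi * (m + 1 / 2)

/-- The matrix `F_t` with `(F_t)_{x,a} = δ_{x,t(a)}`. -/
def Ft (G : SimpleGraph V) : Matrix V (GArc G) ℂ := fun x a => if x = arcT a then 1 else 0

/-- The matrix `F_o` with `(F_o)_{x,a} = δ_{x,o(a)}`. -/
def Fo (G : SimpleGraph V) : Matrix V (GArc G) ℂ := fun x a => if x = arcO a then 1 else 0

/-- The 0/1 matrix `R` with `R_{ab} = 1` iff `m(a,b) = (t(b),o(a)) ∈ A(G) ∩ A(G)⁻¹`. -/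
def Rmat (D : Dgraph V) : Matrix (GArc D.underlying) (GArc D.underlying) ℂ :=
  fun a b => if D.Adj (arcT b) (arcO a) ∧ D.Adj (arcO a) (arcT b) then 1 else 0

/-- `U_θ^{(n,+)}`: the 0/1 matrix with `(a,b)` entry `1` iff `Re(D_θ U_θⁿ)_{ab} > 0`. -/
def suppPow (D : Dgraph V) (η : ℝ) (n : ℕ) :
    Matrix (GArc D.underlying) (GArc D.underlying) ℂ :=
  suppPos (Dtheta D.underlying (etaFun D η) * transferU D.underlying (etaFun D η) ^ n)

/-- `U_θ^{(n,−)}`: the 0/1 matrix with `(a,b)` entry `1` iff `Re(D_θ U_θⁿ)_{ab} < 0`. -/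
def suppPowNeg (D : Dgraph V) (η : ℝ) (n : ℕ) :
    Matrix (GArc D.underlying) (GArc D.underlying) ℂ :=
  suppNeg (Dtheta D.underlying (etaFun D η) * transferU D.underlying (etaFun D η) ^ n)

/-- The number of digons of a digraph. -/
def digonCount (D : Dgraph V) : ℕ :=
  (Finset.univ.filter fun p : V × V => D.Adj p.1 p.2 ∧ D.Adj p.2 p.1).card / 2

/-- The digraph `Y_{a,n-a}`: two complete (digon) blocks `[a]` and `[n]∖[a]`, with all
arcs from the first block to the second. -/
def Ydigraph (n a : ℕ) : Dgraph (Fin n) where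
  adj x y := decide ((x ≠ y) ∧
    ((x.val < a ∧ y.val < a) ∨ (a ≤ x.val ∧ a ≤ y.val) ∨ (x.val < a ∧ a ≤ y.val)))
  loopless := fun v => by simp

/-- The shift operator as a real matrix. -/
def shiftSR (G : SimpleGraph V) : Matrix (GArc G) (GArc G) ℝ :=
  fun a b => if a = arcInv b then 1 else 0

/-- The Grover transfer matrix as a real matrix, given by its entries
`U_{ab} = (2/deg t(b)) δ_{t(b),o(a)} − δ_{a⁻¹,b}`. -/
def groverEnt (G : SimpleGraph V) [DecidableRel G.Adj] : Matrix (GArc G) (GArc G) ℝ :=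
  fun a b => 2 / (G.degree (arcT b)) * (if arcT b = arcO a then 1 else 0)
    - (if arcInv a = b then 1 else 0)

/-- The supports of the square of the transfer matrix of a digraph and of its transpose
coincide (under the canonical identification of the common arc set `A(G^±)` of the common
underlying graph, expressed entrywise via equality of underlying ordered pairs). -/
theorem stmt15 {V : Type} [Fintype V] [DecidableEq V] (η : ℝ) (D : Dgraph V)
    (hconn : D.underlying.Connected)
    (a b : GArc D.underlying) (a' b' : GArc D.transpose.underlying)
    (ha : a.val = a'.val) (hb : b.val = b'.val) :
    suppPow D η 2 a b = suppPow D.transpose η 2 a' b' ∧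
    suppPowNeg D η 2 a b = suppPowNeg D.transpose η 2 a' b' := by
  classical
  have hiff : ∀ x y : V, D.underlying.Adj x y ↔ D.transpose.underlying.Adj x y := by
    intro x y
    show (D.Adj x y ∨ D.Adj y x) ↔ (D.transpose.Adj x y ∨ D.transpose.Adj y x)
    simp only [Dgraph.Adj, Dgraph.transpose]
    exact Or.comm
  let e : GArc D.underlying ≃ GArc D.transpose.underlying := Equiv.subtypeEquiv (Equiv.refl _) (fun p => hiff p.1 p.2)
  have hdeg : ∀ v, D.underlying.degree v = D.transpose.underlying.degree v := by
    intro v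
    unfold SimpleGraph.degree
    apply congrArg Finset.card
    ext w
    simp [SimpleGraph.mem_neighborFinset, hiff]
  have hbdK : ∀ v (c : GArc D.underlying), bdK D.transpose.underlying v (e c) = bdK D.underlying v c := by
    intro v c
    simp only [bdK]
    have h1 : arcT (e c) = arcT c := rfl
    rw [h1, ← hdeg]
  have hbdKreal : ∀ v (c : GArc D.underlying), (starRingEnd ℂ) (bdK D.underlying v c) = bdK D.underlying v c := by
    intro v c
    simp only [bdK, apply_ite (starRingEnd ℂ), Complex.conj_ofReal, map_zero]
  have hC : ∀ c d : GArc D.underlying, coinC D.transpose.underlying (e c) (e d) = coinC D.underlying c d := by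
    intro c d
    simp only [coinC, Matrix.sub_apply, Matrix.smul_apply, Matrix.mul_apply,
      Matrix.conjTranspose_apply, Matrix.one_apply, EmbeddingLike.apply_eq_iff_eq,
      smul_eq_mul]
    congr 2
    apply Finset.sum_congr rfl
    intro v _
    rw [hbdK, hbdK]
  have hstar : ∀ v (c : GArc D.underlying), star (bdK D.underlying v c) = bdK D.underlying v c := by
    intro v c
    simp only [bdK, apply_ite (star : ℂ → ℂ), star_zero, RCLike.star_def, Complex.conj_ofReal]
  have hCreal : ∀ c d : GArc D.underlying, (starRingEnd ℂ) (coinC D.underlying c d) = coinC D.underlying c d := by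
    intro c d
    simp only [coinC, Matrix.sub_apply, Matrix.smul_apply, Matrix.mul_apply,
      Matrix.conjTranspose_apply, Matrix.one_apply, smul_eq_mul, hstar]
    rw [map_sub (starRingEnd ℂ), _root_.map_mul, map_sum]
    simp only [map_ofNat, apply_ite (starRingEnd ℂ), _root_.map_one, map_zero]
    congr 1
    congr 1
    apply Finset.sum_congr rfl
    intro v _
    rw [_root_.map_mul, hbdKreal, hbdKreal]
  have hθ : ∀ c : GArc D.underlying, etaFun D.transpose η (e c) = - etaFun D η c := by
    intro c
    have h2 : D.Adj c.1.1 c.1.2 ∨ D.Adj c.1.2 c.1.1 := c.2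
    have ho : arcO (e c) = arcO c := rfl
    have ht : arcT (e c) = arcT c := rfl
    simp only [etaFun, ho, ht, arcO, arcT]
    have htr : ∀ x y, D.transpose.Adj x y ↔ D.Adj y x := by
      intro x y; simp [Dgraph.Adj, Dgraph.transpose]
    have hval : ((e c) : V × V) = (c : V × V) := rfl
    by_cases h1 : D.Adj c.1.1 c.1.2 <;> by_cases h3 : D.Adj c.1.2 c.1.1 <;>
      simp [htr, hval, h1, h3] <;> tauto
  have hexp : ∀ c : GArc D.underlying,
      Complex.exp (((etaFun D.transpose η) (e c) : ℂ) * Complex.I) =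
        (starRingEnd ℂ) (Complex.exp (((etaFun D η) c : ℂ) * Complex.I)) := by
    intro c
    rw [← Complex.exp_conj, _root_.map_mul, Complex.conj_ofReal, Complex.conj_I, hθ c]
    push_cast
    ring_nf
  have hainv : ∀ c : GArc D.underlying, arcInv (e c) = e (arcInv c) := fun c => Subtype.ext rfl
  have hS : ∀ c d : GArc D.underlying,
      shiftStheta D.transpose.underlying (etaFun D.transpose η) (e c) (e d) = (starRingEnd ℂ) (shiftStheta D.underlying (etaFun D η) c d) := by
    intro c d
    simp only [shiftStheta, hainv, EmbeddingLike.apply_eq_iff_eq,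
      apply_ite (starRingEnd ℂ), map_zero]
    by_cases h : c = arcInv d
    · simp [h, hexp]
    · simp [h]
  have hU : ∀ c d : GArc D.underlying,
      transferU D.transpose.underlying (etaFun D.transpose η) (e c) (e d) = (starRingEnd ℂ) (transferU D.underlying (etaFun D η) c d) := by
    intro c d
    simp only [transferU, Matrix.mul_apply, map_sum]
    rw [← Equiv.sum_comp e (fun x => shiftStheta D.transpose.underlying (etaFun D.transpose η) (e c) x * coinC D.transpose.underlying x (e d))]
    apply Finset.sum_congr rfl
    intro x _
    rw [hS, hC, _root_.map_mul, hCreal]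
  have hU2 : ∀ c d : GArc D.underlying,
      (transferU D.transpose.underlying (etaFun D.transpose η) ^ 2) (e c) (e d) = (starRingEnd ℂ) ((transferU D.underlying (etaFun D η) ^ 2) c d) := by
    intro c d
    simp only [pow_two, Matrix.mul_apply, map_sum]
    rw [← Equiv.sum_comp e (fun x => transferU D.transpose.underlying (etaFun D.transpose η) (e c) x * transferU D.transpose.underlying (etaFun D.transpose η) x (e d))]
    apply Finset.sum_congr rfl
    intro x _
    rw [hU, hU, _root_.map_mul]
  have hD : ∀ c d : GArc D.underlying,
      Dtheta D.transpose.underlying (etaFun D.transpose η) (e c) (e d) = (starRingEnd ℂ) (Dtheta D.underlying (etaFun D η) c d) := by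
    intro c d
    simp only [Dtheta, Matrix.diagonal_apply, EmbeddingLike.apply_eq_iff_eq,
      apply_ite (starRingEnd ℂ), map_zero]
    by_cases h : c = d
    · simp [h, hexp]
    · simp [h]
  have hmain : ∀ c d : GArc D.underlying,
      (Dtheta D.transpose.underlying (etaFun D.transpose η) * transferU D.transpose.underlying (etaFun D.transpose η) ^ 2) (e c) (e d) =
        (starRingEnd ℂ) ((Dtheta D.underlying (etaFun D η) * transferU D.underlying (etaFun D η) ^ 2) c d) := by
    intro c d
    simp only [Matrix.mul_apply, map_sum]
    rw [← Equiv.sum_comp e (fun x => Dtheta D.transpose.underlying (etaFun D.transpose η) (e c) x * (transferU D.transpose.underlying (etaFun D.transpose η) ^ 2) x (e d))]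
    apply Finset.sum_congr rfl
    intro x _
    rw [hD, hU2, _root_.map_mul]
  have hea : e a = a' := Subtype.ext ha
  have heb : e b = b' := Subtype.ext hb
  have key : (Dtheta D.transpose.underlying (etaFun D.transpose η) * transferU D.transpose.underlying (etaFun D.transpose η) ^ 2) a' b' =
      (starRingEnd ℂ) ((Dtheta D.underlying (etaFun D η) * transferU D.underlying (etaFun D η) ^ 2) a b) := by
    rw [← hea, ← heb]; exact hmain a b
  constructor
  · show suppPos (Dtheta D.underlying (etaFun D η) * transferU D.underlying (etaFun D η) ^ 2) a b =
      suppPos (Dtheta D.transpose.underlying (etaFun D.transpose η) * transferU D.transpose.underlying (etaFun D.transpose η) ^ 2) a' b'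
    simp only [suppPos, key, Complex.conj_re]
  · show suppNeg (Dtheta D.underlying (etaFun D η) * transferU D.underlying (etaFun D η) ^ 2) a b =
      suppNeg (Dtheta D.transpose.underlying (etaFun D.transpose η) * transferU D.transpose.underlying (etaFun D.transpose η) ^ 2) a' b'
    simp only [suppNeg, key, Complex.conj_re]
end
end

section
/- Suppose k ≥ 3. Let G be a k-regular digraph (with connected underlying graph) equipped with an η-function θ where 0 ≤ η ≤ π, and let U = U(G^±) be the Grover transfer matrix of G^±. Let R be the 0/1 matrix indexed by A(G^±) with R_{ab} = 1 iff the ordered pair m(a,b) = (t(b), o(a)) belongs to A(G) ∩ A(G)⁻¹, and let J be the all-ones matrix. Then for ε ∈ {+,−}: U_θ^{(2,ε)} = (U²)^ε if 0 ≤ η < π/2; U_θ^{(2,ε)} = (U²)^ε ∘ R if η = π/2; and U_θ^{(2,ε)} = (U²)^ε ∘ R + (U²)^{−ε} ∘ (J − R) if π/2 < η ≤ π, where ∘ denotes the Hadamard (entrywise) product and −ε denotes the opposite sign of ε. -/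
open Matrix Polynomial

noncomputable section

variable {V : Type} [Fintype V] [DecidableEq V]

set_option linter.unusedSectionVars false
set_option linter.unnecessarySeqFocus false
set_option maxHeartbeats 1000000

namespace Stmt17Aux

variable {V : Type} [Fintype V] [DecidableEq V]

@[simp] lemma arcInv_arcInv {G : SimpleGraph V} (a : GArc G) : arcInv (arcInv a) = a :=
  Subtype.ext (by simp [arcInv])

lemma arcInv_eq_iff (G : SimpleGraph V) (a b : GArc G) : arcInv a = b ↔ a = arcInv b := by
  constructor
  · rintro rfl; simp
  · rintro rfl; simp

@[simp] lemma arcO_arcInv {G : SimpleGraph V} (a : GArc G) : arcO (arcInv a) = arcT a := rfl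
@[simp] lemma arcT_arcInv {G : SimpleGraph V} (a : GArc G) : arcT (arcInv a) = arcO a := rfl

lemma etaFun_arcInv (D : Dgraph V) (η : ℝ) (a : GArc D.underlying) :
    etaFun D η (arcInv a) = - etaFun D η a := by
  have ha : D.Adj (arcO a) (arcT a) ∨ D.Adj (arcT a) (arcO a) := a.2
  unfold etaFun
  simp only [arcO_arcInv, arcT_arcInv]
  by_cases h1 : D.Adj (arcO a) (arcT a) <;> by_cases h2 : D.Adj (arcT a) (arcO a) <;>
    simp [h1, h2] <;> tauto

lemma cos_etaFun (D : Dgraph V) (η : ℝ) (a : GArc D.underlying) :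
    Real.cos (etaFun D η a) =
      if D.Adj (arcO a) (arcT a) ∧ D.Adj (arcT a) (arcO a) then 1 else Real.cos η := by
  unfold etaFun
  by_cases h1 : D.Adj (arcO a) (arcT a) <;> by_cases h2 : D.Adj (arcT a) (arcO a) <;>
    simp [h1, h2]

lemma coinC_apply {G : SimpleGraph V} [DecidableRel G.Adj] {k : ℕ} (hk : 3 ≤ k)
    (hreg : ∀ v, G.degree v = k) (a b : GArc G) :
    coinC G a b = (2 / (k : ℂ)) * (if arcT a = arcT b then 1 else 0)
      - (if a = b then 1 else 0) := by
  have hkR : (0:ℝ) < (k:ℝ) := by exact_mod_cast Nat.lt_of_lt_of_le (by norm_num) hk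
  unfold coinC
  rw [Matrix.sub_apply, Matrix.smul_apply, Matrix.mul_apply, Matrix.one_apply]
  have key : ∀ v, ((bdK G)ᴴ) a v * bdK G v b
      = if v = arcT a then
          (if arcT a = arcT b then ((1/Real.sqrt (k:ℝ) : ℝ):ℂ)^2 else 0) else 0 := by
    intro v
    rw [Matrix.conjTranspose_apply]
    unfold bdK
    rw [hreg, hreg]
    split_ifs with h1 h2 h3 <;>
      simp_all [Complex.conj_ofReal, sq] <;> tauto
  rw [Finset.sum_congr rfl fun v _ => key v, Finset.sum_ite_eq' Finset.univ (arcT a)]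
  have hx : ((1/Real.sqrt (k:ℝ) : ℝ):ℂ)^2 = 1 / (k:ℂ) := by
    rw [← Complex.ofReal_pow]
    rw [one_div, inv_pow, Real.sq_sqrt hkR.le]
    push_cast
    rw [one_div]
  simp only [Finset.mem_univ, if_true, hx, smul_eq_mul]
  split_ifs <;> ring

lemma sum_weighted {G : SimpleGraph V} [DecidableRel G.Adj] (f : GArc G → ℂ) (x y : V) :
    ∑ c : GArc G, (if x = arcT c then (1:ℂ) else 0) * (f c * (if arcO c = y then 1 else 0))
      = if h : G.Adj y x then f ⟨(y, x), h⟩ else 0 := by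
  split_ifs with h
  · rw [Finset.sum_eq_single (⟨(y,x), h⟩ : GArc G)]
    · simp [arcT, arcO]
    · intro c _ hc
      by_cases h1 : x = arcT c <;> by_cases h2 : arcO c = y <;> simp [h1, h2]
      exact absurd (show c = (⟨(y,x),h⟩ : GArc G) from Subtype.ext (Prod.ext h2 h1.symm)) hc
    · simp
  · apply Finset.sum_eq_zero
    intro c _
    by_cases h1 : x = arcT c <;> by_cases h2 : arcO c = y <;> simp [h1, h2]
    exact absurd (by rw [← h2, h1]; exact c.2) h

lemma quad_sum {G : SimpleGraph V} [DecidableRel G.Adj] (κ : ℂ) (f : GArc G → ℂ)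
    (a b : GArc G) :
    ∑ c : GArc G,
      (κ * (if arcO a = arcT c then 1 else 0) - (if arcInv a = c then 1 else 0)) * f c *
      (κ * (if arcO c = arcT b then 1 else 0) - (if arcInv c = b then 1 else 0))
    = κ^2 * (if h : G.Adj (arcT b) (arcO a) then f ⟨(arcT b, arcO a), h⟩ else 0)
      - κ * f (arcInv b) * (if arcO a = arcO b then 1 else 0)
      - κ * f (arcInv a) * (if arcT a = arcT b then 1 else 0)
      + f (arcInv a) * (if a = b then 1 else 0) := by
  have key : ∀ c : GArc G,
      (κ * (if arcO a = arcT c then 1 else 0) - (if arcInv a = c then 1 else 0)) * f c *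
      (κ * (if arcO c = arcT b then 1 else 0) - (if arcInv c = b then 1 else 0))
      = κ^2 * ((if arcO a = arcT c then 1 else 0) * (f c * (if arcO c = arcT b then 1 else 0)))
        - (if c = arcInv b then κ * f c * (if arcO a = arcT c then 1 else 0) else 0)
        - (if c = arcInv a then κ * f c * (if arcO c = arcT b then 1 else 0) else 0)
        + (if c = arcInv a then f c * (if c = arcInv b then 1 else 0) else 0) := by
    intro c
    have e1 : (if arcInv a = c then (1:ℂ) else 0) = (if c = arcInv a then 1 else 0) := by
      simp [eq_comm]
    have e2 : (if arcInv c = b then (1:ℂ) else 0) = (if c = arcInv b then 1 else 0) := by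
      simp [arcInv_eq_iff]
    rw [e1, e2]
    by_cases h1 : c = arcInv a <;> by_cases h2 : c = arcInv b <;> simp [h1, h2] <;> split_ifs <;> ring
  rw [Finset.sum_congr rfl fun c _ => key c]
  rw [Finset.sum_add_distrib, Finset.sum_sub_distrib, Finset.sum_sub_distrib,
    ← Finset.mul_sum, sum_weighted,
    Finset.sum_ite_eq' Finset.univ (arcInv b), Finset.sum_ite_eq' Finset.univ (arcInv a),
    Finset.sum_ite_eq' Finset.univ (arcInv a)]
  have : (arcInv a = arcInv b) ↔ (a = b) := by
    rw [arcInv_eq_iff]; simp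
  simp only [Finset.mem_univ, if_true, arcO_arcInv, arcT_arcInv, this]
  rfl



lemma shiftStheta_mul_apply {G : SimpleGraph V} [DecidableRel G.Adj] (θ : GArc G → ℝ)
    (M : Matrix (GArc G) (GArc G) ℂ) (a b : GArc G) :
    (shiftStheta G θ * M) a b
      = Complex.exp ((θ (arcInv a) : ℂ) * Complex.I) * M (arcInv a) b := by
  rw [Matrix.mul_apply, Finset.sum_eq_single (arcInv a)]
  · simp [shiftStheta]
  · intro c _ hc
    have hne : ¬ a = arcInv c := fun h => hc (by rw [h]; simp)
    simp [shiftStheta, hne]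
  · simp

lemma transferU_apply {G : SimpleGraph V} [DecidableRel G.Adj] {k : ℕ} (hk : 3 ≤ k)
    (hreg : ∀ v, G.degree v = k) (θ : GArc G → ℝ) (a b : GArc G) :
    transferU G θ a b = Complex.exp ((θ (arcInv a) : ℂ) * Complex.I) *
      ((2/(k:ℂ)) * (if arcO a = arcT b then 1 else 0) - (if arcInv a = b then 1 else 0)) := by
  rw [transferU, shiftStheta_mul_apply, coinC_apply hk hreg]
  simp only [arcT_arcInv]
  rfl

lemma DUU_apply (D : Dgraph V) (η : ℝ) {k : ℕ} (hk : 3 ≤ k)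
    (hreg : ∀ v, D.underlying.degree v = k) (a b : GArc D.underlying) :
    (Dtheta D.underlying (etaFun D η) * transferU D.underlying (etaFun D η) ^ 2) a b
    = ((2:ℂ)/k)^2 * (if h : D.underlying.Adj (arcT b) (arcO a) then
          Complex.exp ((etaFun D η (arcInv ⟨(arcT b, arcO a), h⟩) : ℂ) * Complex.I) else 0)
      - (2:ℂ)/k * Complex.exp ((etaFun D η b : ℂ) * Complex.I)
          * (if arcO a = arcO b then 1 else 0)
      - (2:ℂ)/k * Complex.exp ((etaFun D η a : ℂ) * Complex.I)
          * (if arcT a = arcT b then 1 else 0)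
      + Complex.exp ((etaFun D η a : ℂ) * Complex.I) * (if a = b then 1 else 0) := by
  have hexp : ∀ c : GArc D.underlying,
      Complex.exp ((etaFun D η c : ℂ) * Complex.I)
        * Complex.exp ((etaFun D η (arcInv c) : ℂ) * Complex.I) = 1 := by
    intro c
    rw [← Complex.exp_add, etaFun_arcInv]
    push_cast
    ring_nf
    exact Complex.exp_zero
  have hDU : ∀ c : GArc D.underlying,
      (Dtheta D.underlying (etaFun D η) * transferU D.underlying (etaFun D η)) a c
      = (2/(k:ℂ)) * (if arcO a = arcT c then 1 else 0) - (if arcInv a = c then 1 else 0) := by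
    intro c
    rw [Dtheta, Matrix.diagonal_mul, transferU_apply hk hreg, ← mul_assoc, hexp, one_mul]
  rw [pow_two, ← Matrix.mul_assoc, Matrix.mul_apply]
  have key : ∀ c : GArc D.underlying,
      (Dtheta D.underlying (etaFun D η) * transferU D.underlying (etaFun D η)) a c
        * transferU D.underlying (etaFun D η) c b
      = ((2/(k:ℂ)) * (if arcO a = arcT c then 1 else 0) - (if arcInv a = c then 1 else 0)) *
        Complex.exp ((etaFun D η (arcInv c) : ℂ) * Complex.I) *
        ((2/(k:ℂ)) * (if arcO c = arcT b then 1 else 0) - (if arcInv c = b then 1 else 0)) := by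
    intro c
    rw [hDU, transferU_apply hk hreg, ← mul_assoc]
  rw [Finset.sum_congr rfl fun c _ => key c, quad_sum]
  simp only [arcInv_arcInv]

lemma etaFun_zero (D : Dgraph V) (a : GArc D.underlying) : etaFun D 0 a = 0 := by
  unfold etaFun; split_ifs <;> norm_num

lemma UU_eq_DUU (D : Dgraph V) :
    groverU D.underlying * groverU D.underlying
      = Dtheta D.underlying (etaFun D 0) * transferU D.underlying (etaFun D 0) ^ 2 := by
  have h0 : etaFun D 0 = fun _ => 0 := funext (etaFun_zero D)
  have hD : Dtheta D.underlying (etaFun D 0) = 1 := by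
    rw [h0, Dtheta]
    simp [Matrix.diagonal_one]
  have hS : shiftStheta D.underlying (etaFun D 0) = shiftS D.underlying := by
    rw [h0]
    funext a b
    simp [shiftStheta, shiftS]
  rw [hD, one_mul, pow_two, transferU, hS, groverU]

lemma re_helper (r s : ℝ) :
    (((r : ℝ) : ℂ) * Complex.exp ((s : ℝ) * Complex.I)).re = r * Real.cos s := by
  rw [Complex.re_ofReal_mul, Complex.exp_ofReal_mul_I_re]

lemma reDUU (D : Dgraph V) (η : ℝ) {k : ℕ} (hk : 3 ≤ k)
    (hreg : ∀ v, D.underlying.degree v = k) (a b : GArc D.underlying) :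
    ((Dtheta D.underlying (etaFun D η) * transferU D.underlying (etaFun D η) ^ 2) a b).re
    = if a = b then (1 - 2/(k:ℝ))^2 * Real.cos (etaFun D η a)
      else if arcT a = arcT b then (4/(k:ℝ)^2 - 2/(k:ℝ)) * Real.cos (etaFun D η a)
      else if arcO a = arcO b then (4/(k:ℝ)^2 - 2/(k:ℝ)) * Real.cos (etaFun D η b)
      else 4/(k:ℝ)^2 * (if D.Adj (arcT b) (arcO a) ∧ D.Adj (arcO a) (arcT b) then 1
        else if D.underlying.Adj (arcT b) (arcO a) then Real.cos η else 0) := by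
  rw [DUU_apply D η hk hreg]
  by_cases hab : a = b
  · subst hab
    have hadj : D.underlying.Adj (arcT a) (arcO a) := a.2.symm
    have hm : arcInv (⟨(arcT a, arcO a), hadj⟩ : GArc D.underlying) = a := Subtype.ext rfl
    rw [dif_pos hadj, hm, if_pos rfl, if_pos rfl, if_pos rfl, if_pos rfl]
    have : ((2:ℂ)/k)^2 * Complex.exp ((etaFun D η a : ℂ) * Complex.I)
        - (2:ℂ)/k * Complex.exp ((etaFun D η a : ℂ) * Complex.I) * 1
        - (2:ℂ)/k * Complex.exp ((etaFun D η a : ℂ) * Complex.I) * 1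
        + Complex.exp ((etaFun D η a : ℂ) * Complex.I) * 1
        = (((1 - 2/(k:ℝ))^2 : ℝ) : ℂ) * Complex.exp ((etaFun D η a : ℂ) * Complex.I) := by
      push_cast
      ring
    rw [this, re_helper]
  · rw [if_neg hab, if_neg hab]
    by_cases ht : arcT a = arcT b
    · have ho : ¬ arcO a = arcO b := fun ho => hab (Subtype.ext (Prod.ext ho ht))
      have hadj : D.underlying.Adj (arcT b) (arcO a) := ht ▸ a.2.symm
      have hm : arcInv (⟨(arcT b, arcO a), hadj⟩ : GArc D.underlying) = a :=
        Subtype.ext (Prod.ext rfl ht.symm)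
      rw [dif_pos hadj, hm, if_pos ht, if_pos ht, if_neg ho]
      have : ((2:ℂ)/k)^2 * Complex.exp ((etaFun D η a : ℂ) * Complex.I)
          - (2:ℂ)/k * Complex.exp ((etaFun D η b : ℂ) * Complex.I) * 0
          - (2:ℂ)/k * Complex.exp ((etaFun D η a : ℂ) * Complex.I) * 1
          + Complex.exp ((etaFun D η a : ℂ) * Complex.I) * 0
          = (((4/(k:ℝ)^2 - 2/(k:ℝ)) : ℝ) : ℂ) * Complex.exp ((etaFun D η a : ℂ) * Complex.I) := by
        push_cast
        ring
      rw [this, re_helper]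
    · rw [if_neg ht, if_neg ht]
      by_cases ho : arcO a = arcO b
      · have hadj : D.underlying.Adj (arcT b) (arcO a) := ho ▸ b.2.symm
        have hm : arcInv (⟨(arcT b, arcO a), hadj⟩ : GArc D.underlying) = b :=
          Subtype.ext (Prod.ext ho rfl)
        rw [dif_pos hadj, hm, if_pos ho, if_pos ho]
        have : ((2:ℂ)/k)^2 * Complex.exp ((etaFun D η b : ℂ) * Complex.I)
            - (2:ℂ)/k * Complex.exp ((etaFun D η b : ℂ) * Complex.I) * 1
            - (2:ℂ)/k * Complex.exp ((etaFun D η a : ℂ) * Complex.I) * 0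
            + Complex.exp ((etaFun D η a : ℂ) * Complex.I) * 0
            = (((4/(k:ℝ)^2 - 2/(k:ℝ)) : ℝ) : ℂ)
                * Complex.exp ((etaFun D η b : ℂ) * Complex.I) := by
          push_cast
          ring
        rw [this, re_helper]
      · rw [if_neg ho, if_neg ho]
        by_cases hadj : D.underlying.Adj (arcT b) (arcO a)
        · rw [dif_pos hadj]
          have : ((2:ℂ)/k)^2
                * Complex.exp ((etaFun D η (arcInv ⟨(arcT b, arcO a), hadj⟩) : ℂ) * Complex.I)
              - (2:ℂ)/k * Complex.exp ((etaFun D η b : ℂ) * Complex.I) * 0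
              - (2:ℂ)/k * Complex.exp ((etaFun D η a : ℂ) * Complex.I) * 0
              + Complex.exp ((etaFun D η a : ℂ) * Complex.I) * 0
              = ((4/(k:ℝ)^2 : ℝ) : ℂ)
                * Complex.exp ((etaFun D η (arcInv ⟨(arcT b, arcO a), hadj⟩) : ℂ)
                    * Complex.I) := by
            push_cast
            ring
          rw [this, re_helper, cos_etaFun]
          simp only [arcO_arcInv, arcT_arcInv]
          congr 1
          rw [if_pos hadj]
          exact if_congr (and_comm) rfl rfl
        · rw [dif_neg hadj]
          have hdg : ¬ (D.Adj (arcT b) (arcO a) ∧ D.Adj (arcO a) (arcT b)) :=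
            fun h => hadj (Or.inl h.1)
          rw [if_neg hdg, if_neg hadj]
          simp

lemma reUU (D : Dgraph V) {k : ℕ} (hk : 3 ≤ k)
    (hreg : ∀ v, D.underlying.degree v = k) (a b : GArc D.underlying) :
    ((groverU D.underlying * groverU D.underlying) a b).re
    = if a = b then (1 - 2/(k:ℝ))^2
      else if arcT a = arcT b then 4/(k:ℝ)^2 - 2/(k:ℝ)
      else if arcO a = arcO b then 4/(k:ℝ)^2 - 2/(k:ℝ)
      else if D.underlying.Adj (arcT b) (arcO a) then 4/(k:ℝ)^2 else 0 := by
  rw [UU_eq_DUU, reDUU D 0 hk hreg]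
  simp only [etaFun_zero, Real.cos_zero, mul_one]
  split_ifs with h1 h2 h3 h4 h5 <;> first
    | rfl
    | ring1
    | (exact absurd (show D.underlying.Adj (arcT b) (arcO a) from Or.inl h4.1) h5)

lemma master (D : Dgraph V) (η : ℝ) {k : ℕ} (hk : 3 ≤ k)
    (hreg : ∀ v, D.underlying.degree v = k) (a b : GArc D.underlying) :
    ((Dtheta D.underlying (etaFun D η) * transferU D.underlying (etaFun D η) ^ 2) a b).re
    = (if D.Adj (arcT b) (arcO a) ∧ D.Adj (arcO a) (arcT b) then 1 else Real.cos η)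
        * ((groverU D.underlying * groverU D.underlying) a b).re := by
  rw [reDUU D η hk hreg, reUU D hk hreg]
  by_cases hab : a = b
  · subst hab
    rw [if_pos rfl, if_pos rfl, cos_etaFun]
    split_ifs with p q q <;>
      first | ring1 | (exact absurd ⟨p.2, p.1⟩ q) | (exact absurd ⟨q.2, q.1⟩ p)
  · rw [if_neg hab, if_neg hab]
    by_cases ht : arcT a = arcT b
    · rw [if_pos ht, if_pos ht, ← ht, cos_etaFun]
      split_ifs with p q q <;>
        first | ring1 | (exact absurd ⟨p.2, p.1⟩ q) | (exact absurd ⟨q.2, q.1⟩ p)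
    · rw [if_neg ht, if_neg ht]
      by_cases ho : arcO a = arcO b
      · rw [if_pos ho, if_pos ho, ho, cos_etaFun]
        split_ifs with p q q <;>
          first | ring1 | (exact absurd ⟨p.2, p.1⟩ q) | (exact absurd ⟨q.2, q.1⟩ p)
      · rw [if_neg ho, if_neg ho]
        by_cases hadj : D.underlying.Adj (arcT b) (arcO a)
        · rw [if_pos hadj, if_pos hadj]
          ring1
        · have hdg : ¬ (D.Adj (arcT b) (arcO a) ∧ D.Adj (arcO a) (arcT b)) :=
            fun h => hadj (Or.inl h.1)
          rw [if_neg hadj, if_neg hadj, if_neg hdg, if_neg hdg]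
          ring1

lemma s1pos (R : Prop) [Decidable R] (cη Y : ℝ) (hc : 0 < cη) :
    (if 0 < (if R then 1 else cη) * Y then (1:ℂ) else 0) = if 0 < Y then 1 else 0 := by
  by_cases hR : R <;> simp only [hR, if_true, if_false] <;> split_ifs <;>
    first | (exfalso; nlinarith) | norm_num

lemma s1neg (R : Prop) [Decidable R] (cη Y : ℝ) (hc : 0 < cη) :
    (if (if R then 1 else cη) * Y < 0 then (1:ℂ) else 0) = if Y < 0 then 1 else 0 := by
  by_cases hR : R <;> simp only [hR, if_true, if_false] <;> split_ifs <;>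
    first | (exfalso; nlinarith) | norm_num

lemma s2pos (R : Prop) [Decidable R] (Y : ℝ) :
    (if 0 < (if R then 1 else (0:ℝ)) * Y then (1:ℂ) else 0)
      = (if 0 < Y then 1 else 0) * (if R then 1 else 0) := by
  by_cases hR : R <;> simp only [hR, if_true, if_false] <;> split_ifs <;>
    first | (exfalso; nlinarith) | norm_num

lemma s2neg (R : Prop) [Decidable R] (Y : ℝ) :
    (if (if R then 1 else (0:ℝ)) * Y < 0 then (1:ℂ) else 0)
      = (if Y < 0 then 1 else 0) * (if R then 1 else 0) := by
  by_cases hR : R <;> simp only [hR, if_true, if_false] <;> split_ifs <;>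
    first | (exfalso; nlinarith) | norm_num

lemma s3pos (R : Prop) [Decidable R] (cη Y : ℝ) (hc : cη < 0) :
    (if 0 < (if R then 1 else cη) * Y then (1:ℂ) else 0)
      = (if 0 < Y then 1 else 0) * (if R then 1 else 0)
        + (if Y < 0 then 1 else 0) * (1 - (if R then 1 else 0)) := by
  by_cases hR : R <;> simp only [hR, if_true, if_false] <;> split_ifs <;>
    first | (exfalso; nlinarith) | norm_num

lemma s3neg (R : Prop) [Decidable R] (cη Y : ℝ) (hc : cη < 0) :
    (if (if R then 1 else cη) * Y < 0 then (1:ℂ) else 0)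
      = (if Y < 0 then 1 else 0) * (if R then 1 else 0)
        + (if 0 < Y then 1 else 0) * (1 - (if R then 1 else 0)) := by
  by_cases hR : R <;> simp only [hR, if_true, if_false] <;> split_ifs <;>
    first | (exfalso; nlinarith) | norm_num

end Stmt17Aux

/-- Structure theorem for the supports of the square of the transfer matrix of a
`k`-regular digraph (`k ≥ 3`), according to the value of `η ∈ [0, π]`. -/
theorem stmt17 {V : Type} [Fintype V] [DecidableEq V] (k : ℕ) (hk : 3 ≤ k) (η : ℝ)
    (hη0 : 0 ≤ η) (hηpi : η ≤ Real.pi) (D : Dgraph V)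
    (hconn : D.underlying.Connected) (hreg : ∀ v, D.underlying.degree v = k) :
    let U := groverU D.underlying
    let J : Matrix (GArc D.underlying) (GArc D.underlying) ℂ := fun _ _ => 1
    (η < Real.pi / 2 →
      suppPow D η 2 = suppPos (U * U) ∧ suppPowNeg D η 2 = suppNeg (U * U)) ∧
    (η = Real.pi / 2 →
      suppPow D η 2 = Matrix.hadamard (suppPos (U * U)) (Rmat D) ∧
      suppPowNeg D η 2 = Matrix.hadamard (suppNeg (U * U)) (Rmat D)) ∧
    (Real.pi / 2 < η →
      suppPow D η 2 =
        Matrix.hadamard (suppPos (U * U)) (Rmat D)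
          + Matrix.hadamard (suppNeg (U * U)) (J - Rmat D) ∧
      suppPowNeg D η 2 =
        Matrix.hadamard (suppNeg (U * U)) (Rmat D)
          + Matrix.hadamard (suppPos (U * U)) (J - Rmat D)) := by
  intro U J
  have hmaster := Stmt17Aux.master D η hk hreg
  refine ⟨fun h1 => ?_, fun h2 => ?_, fun h3 => ?_⟩
  · have hc : 0 < Real.cos η :=
      Real.cos_pos_of_mem_Ioo ⟨by linarith [Real.pi_pos], h1⟩
    constructor
    · ext a b
      show suppPos _ a b = suppPos _ a b
      simp only [suppPos]
      rw [hmaster a b]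
      exact Stmt17Aux.s1pos _ _ _ hc
    · ext a b
      show suppNeg _ a b = suppNeg _ a b
      simp only [suppNeg]
      rw [hmaster a b]
      exact Stmt17Aux.s1neg _ _ _ hc
  · subst h2
    constructor
    · ext a b
      show suppPos _ a b = Matrix.hadamard (suppPos (U * U)) (Rmat D) a b
      simp only [suppPos, Matrix.hadamard_apply, Rmat]
      rw [hmaster a b, Real.cos_pi_div_two]
      exact Stmt17Aux.s2pos _ _
    · ext a b
      show suppNeg _ a b = Matrix.hadamard (suppNeg (U * U)) (Rmat D) a b
      simp only [suppNeg, suppPos, Matrix.hadamard_apply, Rmat]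
      rw [hmaster a b, Real.cos_pi_div_two]
      exact Stmt17Aux.s2neg _ _
  · have hc : Real.cos η < 0 :=
      Real.cos_neg_of_pi_div_two_lt_of_lt h3 (by linarith [Real.pi_pos])
    constructor
    · ext a b
      show suppPos _ a b
        = (Matrix.hadamard (suppPos (U * U)) (Rmat D)
            + Matrix.hadamard (suppNeg (U * U)) (J - Rmat D)) a b
      simp only [suppPos, suppNeg, Matrix.hadamard_apply, Matrix.add_apply,
        Matrix.sub_apply, Rmat, J]
      rw [hmaster a b]
      exact Stmt17Aux.s3pos _ _ _ hc
    · ext a b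
      show suppNeg _ a b
        = (Matrix.hadamard (suppNeg (U * U)) (Rmat D)
            + Matrix.hadamard (suppPos (U * U)) (J - Rmat D)) a b
      simp only [suppPos, suppNeg, Matrix.hadamard_apply, Matrix.add_apply,
        Matrix.sub_apply, Rmat, J]
      rw [hmaster a b]
      exact Stmt17Aux.s3neg _ _ _ hc
end
end

section
/- Suppose k ≥ 3. Let G be a k-regular digraph (with connected underlying graph) equipped with an η-function θ where 0 ≤ η ≤ π, and let d be the number of digons of G. Then Tr(U_θ^{(2,+)}) = 2|E(G^±)| if 0 ≤ η < π/2, and Tr(U_θ^{(2,+)}) = 2d if π/2 ≤ η ≤ π. -/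
open Matrix Polynomial

noncomputable section

variable {V : Type} [Fintype V] [DecidableEq V]

set_option linter.unusedSectionVars false

section AuxStmt18
variable {G : SimpleGraph V} [DecidableRel G.Adj]

lemma arcInv_arcInv (a : GArc G) : arcInv (arcInv a) = a := rfl

lemma arcT_arcInv (a : GArc G) : arcT (arcInv a) = arcO a := rfl

lemma arcO_arcInv (a : GArc G) : arcO (arcInv a) = arcT a := rfl

lemma eq_arcInv_comm {a b : GArc G} : a = arcInv b ↔ b = arcInv a := by
  constructor <;> (rintro rfl; rfl)

lemma arc_eq_inv_of_ends {a b : GArc G} (h1 : arcO b = arcT a) (h2 : arcT b = arcO a) :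
    b = arcInv a := by
  apply Subtype.ext
  exact Prod.ext h1 h2

/-- Coin matrix entry for a `k`-regular graph. -/
lemma coin_apply {k : ℕ} (hreg : ∀ v, G.degree v = k) (hk : 0 < k) (a b : GArc G) :
    coinC G a b = (if arcT a = arcT b then (2 / k : ℂ) else 0) - (if a = b then 1 else 0) := by
  have hb : ∀ (v : V) (c : GArc G),
      bdK G v c = if v = arcT c then ((1 / Real.sqrt k : ℝ) : ℂ) else 0 := by
    intro v c; simp [bdK, hreg]
  have hKK : ((bdK G)ᴴ * bdK G) a b = if arcT a = arcT b then ((1 / k : ℝ) : ℂ) else 0 := by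
    rw [Matrix.mul_apply]
    rw [Finset.sum_eq_single (arcT a)]
    · rw [Matrix.conjTranspose_apply, hb, hb, if_pos rfl]
      by_cases h : arcT a = arcT b
      · rw [if_pos h, if_pos h, Complex.star_def, Complex.conj_ofReal, ← Complex.ofReal_mul]
        congr 1
        rw [div_mul_div_comm, one_mul, Real.mul_self_sqrt (by positivity)]
      · rw [if_neg h, if_neg h, mul_zero]
    · intro v _ hv
      rw [Matrix.conjTranspose_apply, hb, if_neg hv, star_zero, zero_mul]
    · intro h; exact absurd (Finset.mem_univ _) h
  unfold coinC
  rw [Matrix.sub_apply, Matrix.smul_apply, hKK, Matrix.one_apply]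
  split_ifs with h h' h' <;> push_cast [smul_eq_mul] <;> ring

/-- Transfer matrix entry. -/
lemma transfer_apply {k : ℕ} (hreg : ∀ v, G.degree v = k) (hk : 0 < k)
    (θ : GArc G → ℝ) (a b : GArc G) :
    transferU G θ a b = Complex.exp ((θ (arcInv a) : ℂ) * Complex.I) *
      ((if arcO a = arcT b then (2 / k : ℂ) else 0) - (if arcInv a = b then 1 else 0)) := by
  unfold transferU
  rw [Matrix.mul_apply, Finset.sum_eq_single (arcInv a)] <;> unfold shiftStheta
  · rw [if_pos (by rw [arcInv_arcInv]), coin_apply hreg hk, arcT_arcInv]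
  · intro c _ hc
    rw [if_neg (fun h => hc (eq_arcInv_comm.mp h)), zero_mul]
  · intro h; exact absurd (Finset.mem_univ _) h

lemma transfer_sq_diag {k : ℕ} (hreg : ∀ v, G.degree v = k) (hk : 0 < k)
    (θ : GArc G → ℝ) (a : GArc G) :
    (transferU G θ ^ 2) a a = Complex.exp ((θ (arcInv a) : ℂ) * Complex.I) *
      Complex.exp ((θ a : ℂ) * Complex.I) * ((2 / k : ℂ) - 1) ^ 2 := by
  rw [pow_two, Matrix.mul_apply, Finset.sum_eq_single (arcInv a)]
  · rw [transfer_apply hreg hk, transfer_apply hreg hk, arcInv_arcInv, arcT_arcInv,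
      arcO_arcInv]
    rw [if_pos rfl, if_pos rfl, if_pos rfl, if_pos rfl]
    ring
  · intro b _ hb
    rw [transfer_apply hreg hk, transfer_apply hreg hk]
    by_cases h1 : arcO a = arcT b
    · by_cases h2 : arcO b = arcT a
      · exact absurd (arc_eq_inv_of_ends h2 h1.symm) hb
      · have h3 : arcInv b ≠ a := fun h => hb (by rw [← h, arcInv_arcInv])
        rw [if_neg h2, if_neg h3]
        simp
    · have h3 : arcInv a ≠ b := fun h => hb h.symm
      rw [if_neg h1, if_neg h3]
      simp
  · intro h; exact absurd (Finset.mem_univ _) h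

end AuxStmt18
section AuxStmt18b

/-- `θ(a⁻¹) = -θ(a)` for the η-function. -/
lemma etaFun_arcInv (D : Dgraph V) (η : ℝ) (a : GArc D.underlying) :
    etaFun D η (arcInv a) = - etaFun D η a := by
  have ha : D.Adj (arcO a) (arcT a) ∨ D.Adj (arcT a) (arcO a) := a.2
  unfold etaFun
  rw [arcT_arcInv, arcO_arcInv]
  rcases ha with h | h
  · by_cases h2 : D.Adj (arcT a) (arcO a) <;> simp [h, h2]
  · by_cases h2 : D.Adj (arcO a) (arcT a) <;> simp [h, h2]

/-- The equivalence between arcs and darts. -/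
def gArcEquivDart (G : SimpleGraph V) : GArc G ≃ G.Dart where
  toFun a := ⟨a.1, a.2⟩
  invFun d := ⟨d.toProd, d.adj⟩
  left_inv _ := rfl
  right_inv _ := rfl

lemma card_gArc (G : SimpleGraph V) [DecidableRel G.Adj] :
    Fintype.card (GArc G) = 2 * G.edgeFinset.card := by
  rw [Fintype.card_congr (gArcEquivDart G), SimpleGraph.dart_card_eq_twice_card_edges]

/-- The digon graph of a digraph. -/
def digonGraph (D : Dgraph V) : SimpleGraph V where
  Adj x y := D.Adj x y ∧ D.Adj y x
  symm := ⟨fun _ _ h => ⟨h.2, h.1⟩⟩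
  loopless := ⟨fun v h => by
    have hv := D.loopless v
    exact absurd h.1 (by simp [Dgraph.Adj, hv])⟩

instance (D : Dgraph V) : DecidableRel (digonGraph D).Adj :=
  fun x y => inferInstanceAs (Decidable (D.Adj x y ∧ D.Adj y x))

lemma digon_pairs_card (D : Dgraph V) :
    2 * digonCount D =
      (Finset.univ.filter fun p : V × V => D.Adj p.1 p.2 ∧ D.Adj p.2 p.1).card := by
  have hcard : (Finset.univ.filter
      fun p : V × V => D.Adj p.1 p.2 ∧ D.Adj p.2 p.1).card
        = Fintype.card (GArc (digonGraph D)) := by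
    rw [Fintype.card_subtype]
    congr 1
  have heven : Even (Finset.univ.filter
      fun p : V × V => D.Adj p.1 p.2 ∧ D.Adj p.2 p.1).card := by
    rw [hcard, card_gArc]
    exact even_two_mul _
  unfold digonCount
  exact Nat.two_mul_div_two_of_even heven

end AuxStmt18b
/-- For a `k`-regular digraph (`k ≥ 3`) with `d` digons and `η ∈ [0, π]`:
`Tr(U_θ^{(2,+)}) = 2|E(G^±)|` if `0 ≤ η < π/2`, and `Tr(U_θ^{(2,+)}) = 2d` if
`π/2 ≤ η ≤ π`. -/
theorem stmt18 {V : Type} [Fintype V] [DecidableEq V] (k : ℕ) (hk : 3 ≤ k) (η : ℝ)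
    (hη0 : 0 ≤ η) (hηpi : η ≤ Real.pi) (D : Dgraph V)
    (hconn : D.underlying.Connected) (hreg : ∀ v, D.underlying.degree v = k) :
    (η < Real.pi / 2 →
      (suppPow D η 2).trace = 2 * (D.underlying.edgeFinset.card : ℂ)) ∧
    (Real.pi / 2 ≤ η →
      (suppPow D η 2).trace = 2 * (digonCount D : ℂ)) := by
  classical
  have hk0 : 0 < k := by omega
  have hfacneg : (2 / (k : ℝ) - 1) < 0 := by
    have h3 : (3 : ℝ) ≤ (k : ℝ) := by exact_mod_cast hk
    have : 2 / (k : ℝ) ≤ 2 / 3 := by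
      apply div_le_div_of_nonneg_left (by norm_num) (by norm_num) h3
    linarith
  have hfac : (0 : ℝ) < (2 / (k : ℝ) - 1) ^ 2 := by
    have := mul_pos_of_neg_of_neg hfacneg hfacneg
    nlinarith
  have hdiag : ∀ a : GArc D.underlying,
      (Dtheta D.underlying (etaFun D η) * transferU D.underlying (etaFun D η) ^ 2) a a
        = Complex.exp ((etaFun D η a : ℂ) * Complex.I) * (((2 / (k : ℝ) - 1) ^ 2 : ℝ) : ℂ) := by
    intro a
    rw [Matrix.mul_apply, Finset.sum_eq_single a]
    · have hD : Dtheta D.underlying (etaFun D η) a a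
          = Complex.exp ((etaFun D η a : ℂ) * Complex.I) := by
        simp [Dtheta]
      rw [hD, transfer_sq_diag hreg hk0, etaFun_arcInv,
        Complex.ofReal_neg, neg_mul, Complex.exp_neg]
      have hc : ((2 / (k : ℂ)) - 1) ^ 2 = (((2 / (k : ℝ) - 1) ^ 2 : ℝ) : ℂ) := by
        push_cast; ring
      rw [hc, inv_mul_cancel₀ (Complex.exp_ne_zero _), one_mul]
    · intro b _ hb
      rw [show Dtheta D.underlying (etaFun D η) a b = 0 from
        Matrix.diagonal_apply_ne _ (Ne.symm hb), zero_mul]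
    · intro h; exact absurd (Finset.mem_univ _) h
  have hre : ∀ a : GArc D.underlying,
      ((Dtheta D.underlying (etaFun D η) * transferU D.underlying (etaFun D η) ^ 2) a a).re
        = Real.cos (etaFun D η a) * (2 / (k : ℝ) - 1) ^ 2 := by
    intro a
    rw [hdiag a, Complex.mul_re, Complex.ofReal_re, Complex.ofReal_im, mul_zero, sub_zero,
      Complex.exp_ofReal_mul_I_re]
  have htrace : (suppPow D η 2).trace
      = ((Finset.univ.filter fun a : GArc D.underlying =>
          0 < Real.cos (etaFun D η a)).card : ℂ) := by
    unfold suppPow suppPos Matrix.trace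
    rw [← Finset.sum_boole]
    apply Finset.sum_congr rfl
    intro a _
    have : (0 < ((Dtheta D.underlying (etaFun D η)
        * transferU D.underlying (etaFun D η) ^ 2) a a).re)
          ↔ 0 < Real.cos (etaFun D η a) := by
      rw [hre a]
      exact mul_pos_iff_of_pos_right hfac
    exact if_congr this rfl rfl
  constructor
  · intro hlt
    rw [htrace]
    have hcos : 0 < Real.cos η :=
      Real.cos_pos_of_mem_Ioo ⟨by linarith [Real.pi_pos], hlt⟩
    have hall : ∀ a : GArc D.underlying, 0 < Real.cos (etaFun D η a) := by
      intro a
      unfold etaFun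
      split_ifs <;> simp [Real.cos_neg, hcos]
    rw [Finset.filter_true_of_mem (fun a _ => hall a), Finset.card_univ, card_gArc]
    push_cast; ring
  · intro hge
    rw [htrace]
    have hcos : Real.cos η ≤ 0 :=
      Real.cos_nonpos_of_pi_div_two_le_of_le hge (by linarith [Real.pi_pos])
    have hiff : ∀ a : GArc D.underlying,
        (0 < Real.cos (etaFun D η a))
          ↔ (D.Adj (arcO a) (arcT a) ∧ D.Adj (arcT a) (arcO a)) := by
      intro a
      unfold etaFun
      split_ifs with h1 h2
      · simp [h1, h2]
      · simp [h1, h2, not_lt.mpr hcos]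
      · simp [h1, Real.cos_neg, not_lt.mpr hcos]
    have hcount : (Finset.univ.filter fun a : GArc D.underlying =>
        0 < Real.cos (etaFun D η a)).card
          = (Finset.univ.filter fun p : V × V => D.Adj p.1 p.2 ∧ D.Adj p.2 p.1).card := by
      apply Finset.card_bij (fun a _ => a.1)
      · intro a ha
        rw [Finset.mem_filter] at ha ⊢
        exact ⟨Finset.mem_univ _, (hiff a).mp ha.2⟩
      · intro a _ b _ h
        exact Subtype.ext h
      · intro p hp
        rw [Finset.mem_filter] at hp
        refine ⟨⟨p, Or.inl hp.2.1⟩, ?_, rfl⟩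
        rw [Finset.mem_filter]
        exact ⟨Finset.mem_univ _, (hiff _).mpr hp.2⟩
    rw [hcount, ← digon_pairs_card]
    push_cast; ring
end
end
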